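/- There exists an absolute constant c > 0 such that for every finite connected simple graph G = (V,E), every K ⊆ V of even size |K| = k ≥ 2, and every perfect matching M of K: LP_MTCH(G,K,M) ≥ c · d(G,M) / log₂ k. -/

import Mathlib

open Finset
open scoped Classical

variable {V : Type} [Fintype V] [DecidableEq V]

/-- A cut of a graph on vertex set `V`: a nonempty proper subset of the vertices. -/
def IsCut (C : Finset V) : Prop := C.Nonempty ∧ C ≠ Finset.univ

/-- The unordered pair `e` crosses the cut `C`: exactly one of its endpoints lies in `C`. -/
def Crosses (C : Finset V) (e : Sym2 V) : Prop :=
  ∃ u v, e = s(u, v) ∧ u ∈ C ∧ v ∉ C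

/-- `δ(C)`: the edges of `G` with exactly one endpoint in `C`. -/
noncomputable def cutEdges (G : SimpleGraph V) (C : Finset V) : Finset (Sym2 V) :=
  G.edgeFinset.filter (Crosses C)

/-- `M` is a perfect matching of `K`: a collection of disjoint unordered pairs of distinct
vertices partitioning `K`. -/
def IsPerfectMatchingOn (K : Finset V) (M : Finset (Sym2 V)) : Prop :=
  (∀ p ∈ M, ¬ p.IsDiag) ∧
  (∀ v ∈ K, ∃! p, p ∈ M ∧ v ∈ p) ∧
  (∀ p ∈ M, ∀ v ∈ p, v ∈ K)

/-- `d(G,M) = ∑_{{u,v}∈M} d_G(u,v)`. -/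
noncomputable def matchCost (G : SimpleGraph V) (M : Finset (Sym2 V)) : ℕ :=
  ∑ p ∈ M, Sym2.lift ⟨fun u v => G.dist u v, fun _ _ => SimpleGraph.dist_comm⟩ p

/-- The optimum value of `LP_MTCH(G,K,M)`: minimize `∑_{e∈E} x_e` subject to
`∑_{e∈δ(C)} x_e ≥ m(C,M)` (the number of pairs of `M` separated by `C`) for every cut `C`,
`x ≥ 0`. -/
noncomputable def LPMTCH (G : SimpleGraph V) (M : Finset (Sym2 V)) : ℝ :=
  sInf { y | ∃ x : Sym2 V → ℝ, (∀ e, 0 ≤ x e) ∧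
    (∀ C : Finset V, IsCut C →
      ((M.filter (Crosses C)).card : ℝ) ≤ ∑ e ∈ cutEdges G C, x e) ∧
    y = ∑ e ∈ G.edgeFinset, x e }

set_option linter.unusedSectionVars false
set_option maxHeartbeats 1000000

noncomputable def dS (G : SimpleGraph V) (S : Finset V) (w : V) : ℕ :=
  if h : S.Nonempty then S.inf' h (fun s => G.dist w s) else 0

lemma dS_le {G : SimpleGraph V} {S : Finset V} {w s : V} (hs : s ∈ S) :
    dS G S w ≤ G.dist w s := by
  rw [dS, dif_pos ⟨s, hs⟩]
  exact Finset.inf'_le _ hs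

lemma dS_exists {G : SimpleGraph V} {S : Finset V} (hS : S.Nonempty) (w : V) :
    ∃ s ∈ S, dS G S w = G.dist w s := by
  rw [dS, dif_pos hS]
  obtain ⟨i, hi, h⟩ := Finset.exists_mem_eq_inf' hS (fun s => G.dist w s)
  exact ⟨i, hi, h⟩

lemma dS_self {G : SimpleGraph V} {S : Finset V} {s : V} (hs : s ∈ S) : dS G S s = 0 :=
  Nat.le_zero.mp (by simpa [SimpleGraph.dist_self] using dS_le (G := G) (w := s) hs)

lemma dS_lip {G : SimpleGraph V} (hG : G.Connected) {S : Finset V} (hS : S.Nonempty)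
    {a b : V} (hab : G.Adj a b) : dS G S a ≤ dS G S b + 1 := by
  obtain ⟨s, hs, hb⟩ := dS_exists (G := G) hS b
  calc dS G S a ≤ G.dist a s := dS_le hs
    _ ≤ G.dist a b + G.dist b s := hG.dist_triangle
    _ ≤ 1 + dS G S b := by
        rw [hb]
        have : G.dist a b ≤ 1 := SimpleGraph.dist_le (SimpleGraph.Walk.cons hab SimpleGraph.Walk.nil)
        omega
    _ = dS G S b + 1 := by omega

/-- `|d(u,S) - d(v,S)|` for an unordered pair. -/
noncomputable def fdiff (G : SimpleGraph V) (S : Finset V) : Sym2 V → ℕ :=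
  Sym2.lift ⟨fun a b => max (dS G S a) (dS G S b) - min (dS G S a) (dS G S b),
    fun a b => by simp [max_comm, min_comm]⟩

lemma fdiff_mk {G : SimpleGraph V} {S : Finset V} (a b : V) :
    fdiff G S s(a, b) = max (dS G S a) (dS G S b) - min (dS G S a) (dS G S b) := rfl

/-- The level cut at radius r around S. -/
noncomputable def lvl (G : SimpleGraph V) (S : Finset V) (r : ℕ) : Finset V :=
  Finset.univ.filter (fun w => dS G S w ≤ r)

lemma mem_lvl {G : SimpleGraph V} {S : Finset V} {r : ℕ} {w : V} :
    w ∈ lvl G S r ↔ dS G S w ≤ r := by simp [lvl]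

/-- Key inequality (⋆): for each S, the feasible LP value dominates ∑_{p∈M} |d(u_p,S)-d(v_p,S)|. -/
lemma star {G : SimpleGraph V} (hG : G.Connected) {M : Finset (Sym2 V)}
    {x : Sym2 V → ℝ} (hx0 : ∀ e, 0 ≤ x e)
    (hxC : ∀ C : Finset V, IsCut C →
      ((M.filter (Crosses C)).card : ℝ) ≤ ∑ e ∈ cutEdges G C, x e)
    (S : Finset V) :
    (∑ p ∈ M, (fdiff G S p : ℝ)) ≤ ∑ e ∈ G.edgeFinset, x e := by
  have hX0 : (0:ℝ) ≤ ∑ e ∈ G.edgeFinset, x e := Finset.sum_nonneg fun e _ => hx0 e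
  rcases S.eq_empty_or_nonempty with hS | hS
  · have : ∀ p ∈ M, (fdiff G S p : ℝ) = 0 := by
      intro p _
      induction p using Sym2.ind with
      | _ a b => subst hS; simp [fdiff_mk, dS]
    rw [Finset.sum_congr rfl this]
    simpa using hX0
  -- S nonempty
  set T := (Finset.univ.sup (dS G S)) + 1 with hT
  -- per-level inequality, valid for all r
  have hlevel : ∀ r : ℕ, ((M.filter (Crosses (lvl G S r))).card : ℝ) ≤
      ∑ e ∈ cutEdges G (lvl G S r), x e := by
    intro r
    by_cases hu : lvl G S r = Finset.univ
    · have : M.filter (Crosses (lvl G S r)) = ∅ := by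
        apply Finset.filter_eq_empty_iff.mpr
        rintro p _ ⟨a, b, rfl, ha, hb⟩
        exact hb (hu ▸ Finset.mem_univ b)
      rw [this]
      simp only [Finset.card_empty, Nat.cast_zero]
      exact Finset.sum_nonneg fun e _ => hx0 e
    · refine hxC _ ⟨?_, hu⟩
      obtain ⟨s, hs⟩ := hS
      exact ⟨s, mem_lvl.mpr (by simp [dS_self hs])⟩
  -- sum over r ∈ range T
  have hLHS : (∑ p ∈ M, (fdiff G S p : ℕ)) ≤
      ∑ r ∈ Finset.range T, (M.filter (Crosses (lvl G S r))).card := by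
    have swap : ∑ r ∈ Finset.range T, (M.filter (Crosses (lvl G S r))).card
        = ∑ p ∈ M, ((Finset.range T).filter (fun r => Crosses (lvl G S r) p)).card := by
      simp_rw [Finset.card_filter]
      rw [Finset.sum_comm]
    rw [swap]
    apply Finset.sum_le_sum
    intro p hp
    induction p using Sym2.ind with
    | _ a b =>
      have hsub : Finset.Ico (min (dS G S a) (dS G S b)) (max (dS G S a) (dS G S b)) ⊆
          (Finset.range T).filter (fun r => Crosses (lvl G S r) s(a, b)) := by
        intro r hr
        rw [Finset.mem_Ico] at hr
        have hrT : r < T := by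
          have h1 : dS G S a ≤ Finset.univ.sup (dS G S) := Finset.le_sup (Finset.mem_univ a)
          have h2 : dS G S b ≤ Finset.univ.sup (dS G S) := Finset.le_sup (Finset.mem_univ b)
          omega
        refine Finset.mem_filter.mpr ⟨Finset.mem_range.mpr hrT, ?_⟩
        rcases le_total (dS G S a) (dS G S b) with h | h
        · exact ⟨a, b, rfl, mem_lvl.mpr (by omega), fun hc => by
            have := mem_lvl.mp hc; omega⟩
        · exact ⟨b, a, Sym2.eq_swap, mem_lvl.mpr (by omega), fun hc => by
            have := mem_lvl.mp hc; omega⟩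
      calc fdiff G S s(a,b) = max (dS G S a) (dS G S b) - min (dS G S a) (dS G S b) := rfl
        _ = (Finset.Ico (min (dS G S a) (dS G S b)) (max (dS G S a) (dS G S b))).card := by
            rw [Nat.card_Ico]
        _ ≤ _ := Finset.card_le_card hsub
  have hRHS : ∑ r ∈ Finset.range T, (∑ e ∈ cutEdges G (lvl G S r), x e) ≤
      ∑ e ∈ G.edgeFinset, x e := by
    have swap : ∑ r ∈ Finset.range T, (∑ e ∈ cutEdges G (lvl G S r), x e)
        = ∑ e ∈ G.edgeFinset,
            (((Finset.range T).filter (fun r => Crosses (lvl G S r) e)).card : ℝ) * x e := by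
      unfold cutEdges
      simp_rw [Finset.sum_filter]
      rw [Finset.sum_comm]
      congr 1; ext e
      rw [← Finset.sum_filter, Finset.sum_const, nsmul_eq_mul]
    rw [swap]
    apply Finset.sum_le_sum
    intro e he
    have hcard : ((Finset.range T).filter (fun r => Crosses (lvl G S r) e)).card ≤ 1 := by
      apply Finset.card_le_one.mpr
      intro r hr r' hr'
      rw [Finset.mem_filter] at hr hr'
      induction e using Sym2.ind with
      | _ a b =>
        have hadj : G.Adj a b := by
          rw [SimpleGraph.mem_edgeFinset, SimpleGraph.mem_edgeSet] at he; exact he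
        have hl1 : dS G S a ≤ dS G S b + 1 := dS_lip hG hS hadj
        have hl2 : dS G S b ≤ dS G S a + 1 := dS_lip hG hS hadj.symm
        have key : ∀ t : ℕ, Crosses (lvl G S t) s(a,b) →
            (dS G S a ≤ t ∧ t < dS G S b) ∨ (dS G S b ≤ t ∧ t < dS G S a) := by
          rintro t ⟨u', v', he', hu', hv'⟩
          rw [Sym2.eq_iff] at he'
          have hu'' := mem_lvl.mp hu'
          have hv'' : ¬ dS G S v' ≤ t := fun hc => hv' (mem_lvl.mpr hc)
          rcases he' with ⟨rfl, rfl⟩ | ⟨rfl, rfl⟩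
          · left; exact ⟨hu'', by omega⟩
          · right; exact ⟨hu'', by omega⟩
        have k1 := key r hr.2
        have k2 := key r' hr'.2
        omega
    calc (((Finset.range T).filter (fun r => Crosses (lvl G S r) e)).card : ℝ) * x e
        ≤ 1 * x e := by
          apply mul_le_mul_of_nonneg_right _ (hx0 e)
          exact_mod_cast hcard
      _ = x e := one_mul _
  calc (∑ p ∈ M, (fdiff G S p : ℝ))
      = ((∑ p ∈ M, (fdiff G S p : ℕ) : ℕ) : ℝ) := by push_cast; ring
    _ ≤ ((∑ r ∈ Finset.range T, (M.filter (Crosses (lvl G S r))).card : ℕ) : ℝ) := by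
        exact_mod_cast hLHS
    _ = ∑ r ∈ Finset.range T, ((M.filter (Crosses (lvl G S r))).card : ℝ) := by push_cast; ring
    _ ≤ ∑ r ∈ Finset.range T, (∑ e ∈ cutEdges G (lvl G S r), x e) :=
        Finset.sum_le_sum fun r _ => hlevel r
    _ ≤ _ := hRHS

/-- Bernoulli(p) product weight of the subset S of K. -/
noncomputable def wgt (p : ℝ) (K S : Finset V) : ℝ :=
  p ^ S.card * (1 - p) ^ (K.card - S.card)

lemma wgt_nonneg {p : ℝ} (hp0 : 0 ≤ p) (hp1 : p ≤ 1) (K S : Finset V) : 0 ≤ wgt p K S :=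
  mul_nonneg (pow_nonneg hp0 _) (pow_nonneg (by linarith) _)

lemma sum_pow_powerset (p q : ℝ) (T : Finset V) :
    ∑ S ∈ T.powerset, p ^ S.card * q ^ (T.card - S.card) = (p + q) ^ T.card := by
  rw [← Finset.prod_const, Finset.prod_add]
  apply Finset.sum_congr rfl
  intro S hS
  rw [Finset.mem_powerset] at hS
  rw [Finset.prod_const, Finset.prod_const, Finset.card_sdiff_of_subset hS]

lemma wgt_total {p : ℝ} (K : Finset V) :
    ∑ S ∈ K.powerset, wgt p K S = 1 := by
  unfold wgt
  rw [sum_pow_powerset]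
  simp

lemma wgt_avoid {p : ℝ} (K A : Finset V) (hA : A ⊆ K) :
    ∑ S ∈ K.powerset.filter (fun S => S ∩ A = ∅), wgt p K S = (1 - p) ^ A.card := by
  have hset : K.powerset.filter (fun S => S ∩ A = ∅) = (K \ A).powerset := by
    ext S
    simp only [Finset.mem_filter, Finset.mem_powerset, Finset.subset_sdiff,
      ← Finset.disjoint_iff_inter_eq_empty]
  rw [hset]
  have hcard : (K \ A).card = K.card - A.card := Finset.card_sdiff_of_subset hA
  have : ∀ S ∈ (K \ A).powerset, wgt p K S
      = (1-p) ^ A.card * (p ^ S.card * (1-p) ^ ((K \ A).card - S.card)) := by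
    intro S hS
    rw [Finset.mem_powerset] at hS
    have h1 : S.card ≤ (K \ A).card := Finset.card_le_card hS
    have h2 : A.card ≤ K.card := Finset.card_le_card hA
    have : K.card - S.card = ((K \ A).card - S.card) + A.card := by omega
    rw [wgt, this, pow_add]
    ring
  rw [Finset.sum_congr rfl this, ← Finset.mul_sum, sum_pow_powerset]
  simp

lemma wgt_event {p : ℝ} (K A B : Finset V) (hA : A ⊆ K) (hB : B ⊆ K)
    (hAB : Disjoint A B) :
    ∑ S ∈ K.powerset.filter (fun S => S ∩ A = ∅ ∧ (S ∩ B).Nonempty), wgt p K S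
      = (1 - p) ^ A.card * (1 - (1 - p) ^ B.card) := by
  have hiff : ∀ S : Finset V, (S ∩ A = ∅ ∧ ¬ (S ∩ B).Nonempty) ↔ S ∩ (A ∪ B) = ∅ := by
    intro S
    rw [Finset.not_nonempty_iff_eq_empty, Finset.inter_union_distrib_left,
      Finset.union_eq_empty]
  have split : ∑ S ∈ K.powerset.filter (fun S => S ∩ A = ∅), wgt p K S
      = ∑ S ∈ K.powerset.filter (fun S => S ∩ A = ∅ ∧ (S ∩ B).Nonempty), wgt p K S
        + ∑ S ∈ K.powerset.filter (fun S => S ∩ (A ∪ B) = ∅), wgt p K S := by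
    rw [← Finset.sum_filter_add_sum_filter_not (K.powerset.filter (fun S => S ∩ A = ∅))
      (fun S => (S ∩ B).Nonempty), Finset.filter_filter, Finset.filter_filter]
    congr 1
    apply Finset.sum_congr _ (fun _ _ => rfl)
    apply Finset.filter_congr
    intro S _
    simpa using hiff S
  have h1 := wgt_avoid (p := p) K A hA
  have h2 := wgt_avoid (p := p) K (A ∪ B) (Finset.union_subset hA hB)
  have hcard : (A ∪ B).card = A.card + B.card := Finset.card_union_of_disjoint hAB
  have : ∑ S ∈ K.powerset.filter (fun S => S ∩ A = ∅ ∧ (S ∩ B).Nonempty), wgt p K S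
      = (1 - p) ^ A.card - (1 - p) ^ (A ∪ B).card := by linarith [split, h1, h2]
  rw [this, hcard, pow_add]
  ring

lemma num_N1 {n : ℕ} (hn : 2 ≤ n) : (1/8 : ℝ) ≤ (1 - 1/(n:ℝ)) ^ n := by
  have hn0 : (0:ℝ) < n := by positivity
  set m : ℕ := n - 1 with hm
  have hm1 : 1 ≤ m := by omega
  have hmn : (n:ℝ) = (m:ℝ) + 1 := by
    rw [hm]; push_cast [Nat.cast_sub (by omega : 1 ≤ n)]; ring
  have hm0 : (0:ℝ) < m := by exact_mod_cast hm1
  have key : (1 + 1/(m:ℝ)) ^ n ≤ 8 := by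
    have h1 : (1 + 1/(m:ℝ)) ^ n ≤ Real.exp (1/(m:ℝ)) ^ n := by
      apply pow_le_pow_left₀ (by positivity)
      exact Real.add_one_le_exp _ |>.trans_eq' (by ring)
    have h2 : Real.exp (1/(m:ℝ)) ^ n = Real.exp (n/(m:ℝ)) := by
      rw [← Real.exp_nat_mul]; ring_nf
    have h3 : (n:ℝ)/(m:ℝ) ≤ 2 := by
      rw [div_le_iff₀ hm0, hmn]
      have : (1:ℝ) ≤ (m:ℝ) := by exact_mod_cast hm1
      linarith
    have h4 : Real.exp ((n:ℝ)/(m:ℝ)) ≤ Real.exp 2 := Real.exp_le_exp.mpr h3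
    have h5 : Real.exp 2 ≤ 8 := by
      have := Real.exp_one_lt_d9
      calc Real.exp 2 = Real.exp 1 * Real.exp 1 := by
            rw [← Real.exp_add]; norm_num
        _ ≤ 2.7182818286 * 2.7182818286 := by
            apply mul_le_mul this.le this.le (Real.exp_pos 1).le (by norm_num)
        _ ≤ 8 := by norm_num
    calc (1 + 1/(m:ℝ)) ^ n ≤ Real.exp (1/(m:ℝ)) ^ n := h1
      _ = Real.exp (n/(m:ℝ)) := h2
      _ ≤ 8 := h4.trans h5
  have heq : (1 - 1/(n:ℝ)) = (1 + 1/(m:ℝ))⁻¹ := by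
    rw [hmn]
    field_simp
    ring
  rw [heq, inv_pow]
  rw [le_inv_comm₀ (by norm_num) (by positivity)]
  calc (1 + 1/(m:ℝ)) ^ n ≤ 8 := key
    _ = (1/8 : ℝ)⁻¹ := by norm_num

lemma num_N2 {p : ℝ} (hp0 : 0 ≤ p) (hp1 : p ≤ 1) (n : ℕ) (hnp : 1/2 ≤ (n:ℝ) * p) :
    (1 - p) ^ n ≤ 2/3 := by
  have h1 : 1 + (n:ℝ) * p ≤ (1 + p) ^ n := one_add_mul_le_pow (by linarith) n
  have h2 : (1 - p) ^ n * (1 + p) ^ n ≤ 1 := by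
    rw [← mul_pow]
    apply pow_le_one₀ (by nlinarith) (by nlinarith)
  have h3 : (0:ℝ) ≤ (1 - p) ^ n := pow_nonneg (by linarith) n
  have h4 : (1 - p) ^ n * (1 + (n:ℝ) * p) ≤ 1 := by
    calc (1 - p) ^ n * (1 + (n:ℝ) * p) ≤ (1 - p) ^ n * (1 + p) ^ n :=
        mul_le_mul_of_nonneg_left h1 h3
      _ ≤ 1 := h2
  nlinarith

/-- The Bourgain growth condition at scale `j`, radius `r`. -/
def bcond (G : SimpleGraph V) (K : Finset V) (u v : V) (j r : ℕ) : Prop :=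
  2^j ≤ (K.filter (fun t => G.dist u t ≤ r)).card ∧
  2^j ≤ (K.filter (fun t => G.dist v t ≤ r)).card

/-- The Bourgain radius at scale `j`, capped at `cap`. -/
noncomputable def rad (G : SimpleGraph V) (K : Finset V) (u v : V) (cap j : ℕ) : ℕ :=
  Nat.find (⟨cap, Or.inl rfl⟩ : ∃ r, r = cap ∨ bcond G K u v j r)

lemma rad_le_cap (G : SimpleGraph V) (K : Finset V) (u v : V) (cap j : ℕ) :
    rad G K u v cap j ≤ cap :=
  Nat.find_le (Or.inl rfl)

lemma rad_spec (G : SimpleGraph V) (K : Finset V) (u v : V) (cap j : ℕ) :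
    rad G K u v cap j = cap ∨ bcond G K u v j (rad G K u v cap j) :=
  Nat.find_spec (⟨cap, Or.inl rfl⟩ : ∃ r, r = cap ∨ bcond G K u v j r)

lemma rad_min (G : SimpleGraph V) (K : Finset V) (u v : V) (cap j : ℕ) {m : ℕ}
    (h : m < rad G K u v cap j) : ¬ (m = cap ∨ bcond G K u v j m) :=
  Nat.find_min (⟨cap, Or.inl rfl⟩ : ∃ r, r = cap ∨ bcond G K u v j r) h

lemma rad_zero (G : SimpleGraph V) {K : Finset V} {u v : V} (hu : u ∈ K) (hv : v ∈ K)
    (cap : ℕ) : rad G K u v cap 0 = 0 := by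
  rw [rad, Nat.find_eq_zero]
  right
  constructor
  · rw [pow_zero, Nat.one_le_iff_ne_zero, ← Nat.pos_iff_ne_zero, Finset.card_pos]
    exact ⟨u, Finset.mem_filter.mpr ⟨hu, by simp [SimpleGraph.dist_self]⟩⟩
  · rw [pow_zero, Nat.one_le_iff_ne_zero, ← Nat.pos_iff_ne_zero, Finset.card_pos]
    exact ⟨v, Finset.mem_filter.mpr ⟨hv, by simp [SimpleGraph.dist_self]⟩⟩

lemma rad_mono (G : SimpleGraph V) (K : Finset V) (u v : V) (cap : ℕ) {i j : ℕ}
    (hij : i ≤ j) : rad G K u v cap i ≤ rad G K u v cap j := by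
  apply Nat.find_le
  rcases rad_spec G K u v cap j with h | h
  · exact Or.inl h
  · exact Or.inr ⟨le_trans (Nat.pow_le_pow_right (by norm_num) hij) h.1,
      le_trans (Nat.pow_le_pow_right (by norm_num) hij) h.2⟩

lemma rad_top (G : SimpleGraph V) {K : Finset V} {u v : V} (hv : v ∈ K)
    {cap L : ℕ} (hcap : cap ≤ G.dist u v) (hL : K.card ≤ 2^L) :
    rad G K u v cap L = cap := by
  refine le_antisymm (rad_le_cap _ _ _ _ _ _) ?_
  by_contra hlt
  push_neg at hlt
  rcases rad_spec G K u v cap L with h | h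
  · omega
  · have h1 : K.card ≤ (K.filter (fun t => G.dist u t ≤ rad G K u v cap L)).card :=
      le_trans hL h.1
    have h2 : K.filter (fun t => G.dist u t ≤ rad G K u v cap L) = K :=
      Finset.eq_of_subset_of_card_le (Finset.filter_subset _ _) h1
    have h3 : v ∈ K.filter (fun t => G.dist u t ≤ rad G K u v cap L) := by rw [h2]; exact hv
    have h4 := (Finset.mem_filter.mp h3).2
    omega

/-- Expectation lower bound from an event forcing `g ≥ Δ`. -/
lemma exp_ge_event {p : ℝ} (hp0 : 0 ≤ p) (hp1 : p ≤ 1) (K A B : Finset V)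
    (hA : A ⊆ K) (hB : B ⊆ K) (hAB : Disjoint A B) (Δ : ℕ) (g : Finset V → ℕ)
    (hg : ∀ S ∈ K.powerset, S ∩ A = ∅ → (S ∩ B).Nonempty → Δ ≤ g S) :
    (Δ : ℝ) * ((1 - p) ^ A.card * (1 - (1 - p) ^ B.card))
      ≤ ∑ S ∈ K.powerset, wgt p K S * (g S : ℝ) := by
  have key : ∑ S ∈ K.powerset.filter (fun S => S ∩ A = ∅ ∧ (S ∩ B).Nonempty),
      wgt p K S * (Δ : ℝ) ≤ ∑ S ∈ K.powerset, wgt p K S * (g S : ℝ) := by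
    calc ∑ S ∈ K.powerset.filter (fun S => S ∩ A = ∅ ∧ (S ∩ B).Nonempty),
          wgt p K S * (Δ : ℝ)
        ≤ ∑ S ∈ K.powerset.filter (fun S => S ∩ A = ∅ ∧ (S ∩ B).Nonempty),
          wgt p K S * (g S : ℝ) := by
          apply Finset.sum_le_sum
          intro S hS
          rw [Finset.mem_filter] at hS
          apply mul_le_mul_of_nonneg_left _ (wgt_nonneg hp0 hp1 K S)
          exact_mod_cast hg S hS.1 hS.2.1 hS.2.2
      _ ≤ _ := by
          apply Finset.sum_le_sum_of_subset_of_nonneg (Finset.filter_subset _ _)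
          intro S hS _
          exact mul_nonneg (wgt_nonneg hp0 hp1 K S) (Nat.cast_nonneg _)
  rw [← Finset.sum_mul, wgt_event K A B hA hB hAB] at key
  linarith [key]

/-- The per-pair, per-scale Bourgain estimate. -/
lemma scale_bound {G : SimpleGraph V} (hG : G.Connected) {K : Finset V} {u v : V}
    (hu : u ∈ K) (hv : v ∈ K) (huv : u ≠ v) (hKsub : True) (j : ℕ) :
    ((rad G K u v ((G.dist u v + 1)/2) (j+1) : ℝ) - rad G K u v ((G.dist u v + 1)/2) j) / 24
      ≤ ∑ S ∈ K.powerset, wgt ((1/2:ℝ)^(j+1)) K S * (fdiff G S s(u,v) : ℝ) := by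
  set d := G.dist u v with hd
  have hd1 : 1 ≤ d := hG.pos_dist_of_ne huv
  set cap := (d+1)/2 with hcap
  set p : ℝ := (1/2:ℝ)^(j+1) with hp
  have hp0 : 0 ≤ p := by positivity
  have hp1 : p ≤ 1 := by
    rw [hp]; apply pow_le_one₀ <;> norm_num
  have hsum_nonneg : (0:ℝ) ≤ ∑ S ∈ K.powerset, wgt p K S * (fdiff G S s(u,v) : ℝ) :=
    Finset.sum_nonneg fun S _ => mul_nonneg (wgt_nonneg hp0 hp1 K S) (Nat.cast_nonneg _)
  set ρ := rad G K u v cap (j+1) with hρ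
  set ρ' := rad G K u v cap j with hρ'
  rcases le_or_gt ρ ρ' with hle | hlt
  · have : ((ρ:ℝ) - ρ') ≤ 0 := by
      have : (ρ:ℝ) ≤ ρ' := by exact_mod_cast hle
      linarith
    linarith [hsum_nonneg]
  -- ρ' < ρ
  have hρcap : ρ ≤ cap := rad_le_cap _ _ _ _ _ _
  have hρ1 : 1 ≤ ρ := by omega
  -- minimality of ρ at ρ - 1
  have hmin : ¬ (ρ - 1 = cap ∨ bcond G K u v (j+1) (ρ-1)) := by
    have := rad_min G K u v cap (j+1) (m := ρ - 1) (by rw [← hρ]; omega)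
    exact this
  push_neg at hmin
  obtain ⟨hne, hnc⟩ := hmin
  rw [bcond, not_and_or] at hnc
  push_neg at hnc
  -- ρ' satisfies bcond at scale j
  have hρ'cond : bcond G K u v j ρ' := by
    rcases rad_spec G K u v cap j with h | h
    · rw [← hρ'] at h; omega
    · rw [← hρ'] at h; exact h
  -- common facts
  have hdisj : ∀ a b : V, G.dist a b = d →
      Disjoint (K.filter (fun t => G.dist a t ≤ ρ - 1)) (K.filter (fun t => G.dist b t ≤ ρ')) := by
    intro a b hab
    rw [Finset.disjoint_left]
    intro t ht ht'
    have h1 := (Finset.mem_filter.mp ht).2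
    have h2 := (Finset.mem_filter.mp ht').2
    have h3 : G.dist a b ≤ G.dist a t + G.dist t b := hG.dist_triangle
    have h4 : G.dist t b = G.dist b t := SimpleGraph.dist_comm
    omega
  -- the event forces fdiff ≥ ρ - ρ'
  have hforce : ∀ a b : V, (∀ S : Finset V, fdiff G S s(a,b) = fdiff G S s(u,v)) →
      ∀ S ∈ K.powerset, S ∩ (K.filter (fun t => G.dist a t ≤ ρ - 1)) = ∅ →
      (S ∩ (K.filter (fun t => G.dist b t ≤ ρ'))).Nonempty → ρ - ρ' ≤ fdiff G S s(u,v) := by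
    intro a b hsym S hS hSA hSB
    rw [Finset.mem_powerset] at hS
    obtain ⟨s₁, hs₁⟩ := hSB
    rw [Finset.mem_inter, Finset.mem_filter] at hs₁
    have hb : dS G S b ≤ ρ' := le_trans (dS_le hs₁.1) hs₁.2.2
    have hSne : S.Nonempty := ⟨s₁, hs₁.1⟩
    obtain ⟨s₀, hs₀S, hs₀⟩ := dS_exists (G := G) hSne a
    have hs₀K : s₀ ∈ K := hS hs₀S
    have hs₀A : s₀ ∉ K.filter (fun t => G.dist a t ≤ ρ - 1) := by
      intro hc
      have : s₀ ∈ S ∩ (K.filter (fun t => G.dist a t ≤ ρ - 1)) :=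
        Finset.mem_inter.mpr ⟨hs₀S, hc⟩
      rw [hSA] at this
      exact absurd this (Finset.notMem_empty _)
    have ha : ρ ≤ dS G S a := by
      rw [hs₀]
      by_contra hcon
      exact hs₀A (Finset.mem_filter.mpr ⟨hs₀K, by omega⟩)
    rw [← hsym S, fdiff_mk]
    omega
  -- probability lower bound
  have hprob : ∀ A B : Finset V, A.card ≤ 2^(j+1) → 2^j ≤ B.card →
      (1/24 : ℝ) ≤ (1 - p) ^ A.card * (1 - (1 - p) ^ B.card) := by
    intro A B hA hB
    have hq0 : (0:ℝ) ≤ 1 - p := by linarith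
    have hq1 : (1:ℝ) - p ≤ 1 := by linarith
    have h8 : (1/8 : ℝ) ≤ (1 - p) ^ A.card := by
      have e1 : (1 - p) ^ A.card ≥ (1 - p) ^ (2^(j+1)) := pow_le_pow_of_le_one hq0 hq1 hA
      have e2 : (1/8 : ℝ) ≤ (1 - p) ^ (2^(j+1) : ℕ) := by
        have hn : 2 ≤ 2^(j+1) := by
          calc 2 = 2^1 := by norm_num
            _ ≤ 2^(j+1) := Nat.pow_le_pow_right (by norm_num) (by omega)
        have := num_N1 hn
        have hcast : (1:ℝ) - 1/((2^(j+1) : ℕ) : ℝ) = 1 - p := by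
          rw [hp]
          push_cast
          rw [div_pow]
          norm_num
        rwa [hcast] at this
      linarith
    have h3 : (1 - (1 - p) ^ B.card) ≥ 1/3 := by
      have e1 : (1 - p) ^ B.card ≤ (1 - p) ^ (2^j : ℕ) := pow_le_pow_of_le_one hq0 hq1 hB
      have e2 : (1 - p) ^ (2^j : ℕ) ≤ 2/3 := by
        apply num_N2 hp0 hp1
        have : ((2^j : ℕ) : ℝ) * p = 1/2 := by
          rw [hp]
          push_cast
          rw [div_pow, one_pow, pow_succ]
          field_simp
        linarith [this.ge]
      linarith
    have hA0 : (0:ℝ) ≤ (1-p) ^ A.card := pow_nonneg hq0 _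
    nlinarith
  -- case split on which ball is small
  have main : (↑(ρ - ρ') : ℝ) * (1/24 : ℝ) ≤
      ∑ S ∈ K.powerset, wgt p K S * (fdiff G S s(u,v) : ℝ) := by
    rcases hnc with hsmall | hsmall
    · refine le_trans ?_ (exp_ge_event hp0 hp1 K
          (K.filter (fun t => G.dist u t ≤ ρ - 1)) (K.filter (fun t => G.dist v t ≤ ρ'))
          (Finset.filter_subset _ _) (Finset.filter_subset _ _)
          (hdisj u v rfl) (ρ - ρ') (fun S => fdiff G S s(u,v))
          (hforce u v (fun S => rfl)))
      apply mul_le_mul_of_nonneg_left _ (Nat.cast_nonneg _)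
      exact hprob _ _ (by omega) hρ'cond.2
    · refine le_trans ?_ (exp_ge_event hp0 hp1 K
          (K.filter (fun t => G.dist v t ≤ ρ - 1)) (K.filter (fun t => G.dist u t ≤ ρ'))
          (Finset.filter_subset _ _) (Finset.filter_subset _ _)
          (hdisj v u (by rw [SimpleGraph.dist_comm, ← hd])) (ρ - ρ')
          (fun S => fdiff G S s(u,v))
          (hforce v u (fun S => by rw [Sym2.eq_swap])))
      apply mul_le_mul_of_nonneg_left _ (Nat.cast_nonneg _)
      exact hprob _ _ (by omega) hρ'cond.1
  have : (↑(ρ - ρ') : ℝ) = (ρ:ℝ) - ρ' := by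
    rw [Nat.cast_sub hlt.le]
  linarith [main]

/-- A walk from inside `C` to outside `C` has a crossing edge. -/
lemma exists_cross_edge {G : SimpleGraph V} {C : Finset V} :
    ∀ {a b : V}, G.Walk a b → a ∈ C → b ∉ C →
      ∃ e ∈ G.edgeFinset, Crosses C e := by
  intro a b w
  induction w with
  | nil => intro ha hb; exact absurd ha hb
  | @cons a c b h q ih =>
    intro ha hb
    by_cases hc : c ∈ C
    · exact ih hc hb
    · exact ⟨s(a, c), SimpleGraph.mem_edgeFinset.mpr ((SimpleGraph.mem_edgeSet G).mpr h),
        ⟨a, c, rfl, ha, hc⟩⟩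

/-- The central estimate: any feasible LP solution has value at least
`matchCost / (96 log₂ k)`. -/
lemma core {G : SimpleGraph V} (hG : G.Connected) {K : Finset V} (hK2 : 2 ≤ K.card)
    {M : Finset (Sym2 V)} (hM : IsPerfectMatchingOn K M) {x : Sym2 V → ℝ}
    (hx0 : ∀ e, 0 ≤ x e)
    (hxC : ∀ C : Finset V, IsCut C →
      ((M.filter (Crosses C)).card : ℝ) ≤ ∑ e ∈ cutEdges G C, x e) :
    (matchCost G M : ℝ) ≤ 96 * Real.logb 2 (K.card : ℝ) * ∑ e ∈ G.edgeFinset, x e := by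
  set X := ∑ e ∈ G.edgeFinset, x e with hX
  have hX0 : 0 ≤ X := Finset.sum_nonneg fun e _ => hx0 e
  set L := Nat.clog 2 K.card with hL
  have hL1 : 1 ≤ L := Nat.clog_pos (by norm_num) hK2
  have hLpow : K.card ≤ 2 ^ L := Nat.le_pow_clog (by norm_num) _
  have hp0 : ∀ j : ℕ, (0:ℝ) ≤ (1/2:ℝ)^(j+1) := fun j => by positivity
  have hp1 : ∀ j : ℕ, (1/2:ℝ)^(j+1) ≤ 1 := fun j => by
    apply pow_le_one₀ <;> norm_num
  -- per scale: expected total fdiff is at most X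
  have stepj : ∀ j : ℕ,
      ∑ q ∈ M, ∑ S ∈ K.powerset, wgt ((1/2:ℝ)^(j+1)) K S * (fdiff G S q : ℝ) ≤ X := by
    intro j
    rw [Finset.sum_comm]
    calc ∑ S ∈ K.powerset, ∑ q ∈ M, wgt ((1/2:ℝ)^(j+1)) K S * (fdiff G S q : ℝ)
        = ∑ S ∈ K.powerset, wgt ((1/2:ℝ)^(j+1)) K S * (∑ q ∈ M, (fdiff G S q : ℝ)) := by
          apply Finset.sum_congr rfl
          intro S _
          rw [Finset.mul_sum]
      _ ≤ ∑ S ∈ K.powerset, wgt ((1/2:ℝ)^(j+1)) K S * X := by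
          apply Finset.sum_le_sum
          intro S _
          exact mul_le_mul_of_nonneg_left (star hG hx0 hxC S) (wgt_nonneg (hp0 j) (hp1 j) K S)
      _ = X := by rw [← Finset.sum_mul, wgt_total, one_mul]
  -- per pair: the scales telescope
  have pairbound : ∀ q ∈ M,
      ((Sym2.lift ⟨fun u v => G.dist u v, fun _ _ => SimpleGraph.dist_comm⟩ q : ℕ) : ℝ) / 48
        ≤ ∑ j ∈ Finset.range L, ∑ S ∈ K.powerset,
            wgt ((1/2:ℝ)^(j+1)) K S * (fdiff G S q : ℝ) := by
    intro q hq
    revert hq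
    induction q using Sym2.ind with
    | _ u v =>
      intro hq
      have hu : u ∈ K := hM.2.2 _ hq u (Sym2.mem_mk_left u v)
      have hv : v ∈ K := hM.2.2 _ hq v (Sym2.mem_mk_right u v)
      have hne : u ≠ v := by
        have := hM.1 _ hq
        rw [Sym2.mk_isDiag_iff] at this
        exact this
      set d := G.dist u v with hd
      have hd1 : 1 ≤ d := hG.pos_dist_of_ne hne
      set cap := (d + 1) / 2 with hcap
      have htel : ∑ j ∈ Finset.range L,
          (((rad G K u v cap (j+1) : ℝ) - rad G K u v cap j) / 24)
          = (cap : ℝ) / 24 := by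
        rw [← Finset.sum_div]
        rw [Finset.sum_range_sub (fun j => (rad G K u v cap j : ℝ))]
        rw [rad_top G hv (by omega) hLpow, rad_zero G hu hv]
        norm_num
      have hsum : (cap : ℝ) / 24 ≤ ∑ j ∈ Finset.range L, ∑ S ∈ K.powerset,
          wgt ((1/2:ℝ)^(j+1)) K S * (fdiff G S s(u,v) : ℝ) := by
        rw [← htel]
        exact Finset.sum_le_sum fun j _ => scale_bound hG hu hv hne trivial j
      refine le_trans ?_ hsum
      have hlift : (Sym2.lift ⟨fun u v => G.dist u v, fun _ _ => SimpleGraph.dist_comm⟩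
          s(u,v) : ℕ) = d := rfl
      rw [hlift]
      have h2cap : d ≤ 2 * cap := by omega
      have : (d:ℝ) ≤ 2 * (cap:ℝ) := by exact_mod_cast h2cap
      linarith
  -- combine
  have total : (matchCost G M : ℝ) / 48 ≤ (L:ℝ) * X := by
    calc (matchCost G M : ℝ) / 48
        = ∑ q ∈ M, ((Sym2.lift ⟨fun u v => G.dist u v, fun _ _ => SimpleGraph.dist_comm⟩ q : ℕ) : ℝ) / 48 := by
          rw [← Finset.sum_div, matchCost]
          push_cast
          ring
      _ ≤ ∑ q ∈ M, ∑ j ∈ Finset.range L, ∑ S ∈ K.powerset,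
            wgt ((1/2:ℝ)^(j+1)) K S * (fdiff G S q : ℝ) :=
          Finset.sum_le_sum pairbound
      _ = ∑ j ∈ Finset.range L, ∑ q ∈ M, ∑ S ∈ K.powerset,
            wgt ((1/2:ℝ)^(j+1)) K S * (fdiff G S q : ℝ) := Finset.sum_comm
      _ ≤ ∑ j ∈ Finset.range L, X := Finset.sum_le_sum fun j _ => stepj j
      _ = (L:ℝ) * X := by rw [Finset.sum_const, Finset.card_range, nsmul_eq_mul]
  -- bound L by 2 log₂ k
  have hlogk : (1:ℝ) ≤ Real.logb 2 (K.card : ℝ) := by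
    have : Real.logb 2 2 ≤ Real.logb 2 (K.card : ℝ) := by
      apply Real.logb_le_logb_of_le (by norm_num : (1:ℝ) < 2) (by norm_num)
      exact_mod_cast hK2
    simpa [Real.logb_self_eq_one (by norm_num : (1:ℝ) < 2)] using this
  have hLlog : (L:ℝ) ≤ 2 * Real.logb 2 (K.card : ℝ) := by
    have hpred : 2 ^ (L - 1) < K.card := by
      have := Nat.pow_pred_clog_lt_self (b := 2) (by norm_num) (x := K.card) (by omega)
      simpa [hL, Nat.pred_eq_sub_one] using this
    have hstep : ((L:ℝ) - 1) < Real.logb 2 (K.card : ℝ) := by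
      have h1 : Real.logb 2 ((2:ℝ) ^ (L - 1)) < Real.logb 2 (K.card : ℝ) := by
        apply Real.logb_lt_logb (by norm_num : (1:ℝ) < 2) (by positivity)
        exact_mod_cast hpred
      have h2 : Real.logb 2 ((2:ℝ) ^ (L - 1)) = ((L - 1 : ℕ) : ℝ) := by
        rw [Real.logb_pow, Real.logb_self_eq_one (by norm_num : (1:ℝ) < 2)]
        ring
      rw [h2] at h1
      have h3 : ((L - 1 : ℕ) : ℝ) = (L:ℝ) - 1 := by
        rw [Nat.cast_sub hL1]
        norm_num
      linarith [h3 ▸ h1]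
    linarith
  calc (matchCost G M : ℝ) ≤ 48 * ((L:ℝ) * X) := by linarith [total]
    _ ≤ 48 * (2 * Real.logb 2 (K.card : ℝ) * X) := by
        apply mul_le_mul_of_nonneg_left _ (by norm_num)
        exact mul_le_mul_of_nonneg_right hLlog hX0
    _ = 96 * Real.logb 2 (K.card : ℝ) * X := by ring

/-- There is an absolute constant `c > 0` such that for every finite connected
simple graph `G`, every `K ⊆ V` of even size `k ≥ 2` and every perfect matching `M` of `K`,
`LP_MTCH(G,K,M) ≥ c · d(G,M) / log₂ k`. -/
theorem statement8 :
    ∃ c : ℝ, 0 < c ∧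
      ∀ (V : Type) [Fintype V] [DecidableEq V] (G : SimpleGraph V),
        G.Connected →
        ∀ K : Finset V, Even K.card → 2 ≤ K.card →
          ∀ M : Finset (Sym2 V), IsPerfectMatchingOn K M →
            c * (matchCost G M : ℝ) / Real.logb 2 (K.card : ℝ) ≤ LPMTCH G M := by
  refine ⟨1/96, by norm_num, ?_⟩
  intro V _ _ G hG K _ hK2 M hM
  have hlog : 0 < Real.logb 2 (K.card : ℝ) :=
    Real.logb_pos (by norm_num) (by exact_mod_cast hK2.trans_lt' (by norm_num))
  rw [LPMTCH]
  apply le_csInf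
  · -- the feasible set is nonempty
    refine ⟨∑ e ∈ G.edgeFinset, (fun _ => (M.card : ℝ)) e, (fun _ => (M.card : ℝ)), ?_, ?_, rfl⟩
    · intro e; positivity
    · intro C hC
      rcases Finset.eq_empty_or_nonempty (M.filter (Crosses C)) with hemp | hne
      · rw [hemp]
        simp only [Finset.card_empty, Nat.cast_zero]
        exact Finset.sum_nonneg fun e _ => by positivity
      · obtain ⟨p, hp⟩ := hne
        rw [Finset.mem_filter] at hp
        obtain ⟨a, b, hab, haC, hbC⟩ := hp.2
        obtain ⟨e₀, he₀, hce₀⟩ := exists_cross_edge ((hG a b).some) haC hbC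
        have hce : e₀ ∈ cutEdges G C := Finset.mem_filter.mpr ⟨he₀, hce₀⟩
        have h1 : (1:ℕ) ≤ (cutEdges G C).card := Finset.card_pos.mpr ⟨e₀, hce⟩
        have h2 : (M.filter (Crosses C)).card ≤ M.card :=
          Finset.card_le_card (Finset.filter_subset _ _)
        rw [Finset.sum_const, nsmul_eq_mul]
        calc ((M.filter (Crosses C)).card : ℝ) ≤ (M.card : ℝ) := by exact_mod_cast h2
          _ = 1 * (M.card : ℝ) := (one_mul _).symm
          _ ≤ ((cutEdges G C).card : ℝ) * (M.card : ℝ) := by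
              apply mul_le_mul_of_nonneg_right _ (Nat.cast_nonneg _)
              exact_mod_cast h1
  · -- every feasible value is at least the bound
    rintro y ⟨x, hx0, hxC, rfl⟩
    have hcore := core hG hK2 hM hx0 hxC
    rw [div_le_iff₀ hlog]
    nlinarith [hcore, hlog]
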